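/- Fix σ > 0. For c > 0, define F(c,x) = ∫_{−∞}^{∞} f(c,x,w) exp(−w²/(2σ²)) dw, where f(c,x,w) = (w+x) tanh(c(w+x)/σ²) + (w−x) tanh(c(w−x)/σ²). Then for every fixed c > 0, the function x ↦ F(c,x) is (strictly) increasing on x > 0. -/
import Mathlib

open MeasureTheory Real Set Function Filter

namespace Stmt10

noncomputable def g (a u : ℝ) : ℝ := u * Real.tanh (a * u)
noncomputable def K (b w : ℝ) : ℝ := Real.exp (-(b * w ^ 2))

lemma continuous_tanh' : Continuous Real.tanh := by
  have h : Real.tanh = fun x => Real.sinh x / Real.cosh x :=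
    funext fun x => Real.tanh_eq_sinh_div_cosh x
  rw [h]
  exact Real.continuous_sinh.div Real.continuous_cosh fun x => (Real.cosh_pos x).ne'

lemma tanh_lt_tanh' {s t : ℝ} (h : s < t) : Real.tanh s < Real.tanh t := by
  rw [Real.tanh_eq_sinh_div_cosh, Real.tanh_eq_sinh_div_cosh,
    div_lt_div_iff₀ (Real.cosh_pos s) (Real.cosh_pos t)]
  have h1 : 0 < Real.sinh (t - s) := Real.sinh_pos_iff.mpr (by linarith)
  rw [Real.sinh_sub] at h1
  nlinarith

lemma tanh_le_tanh' {s t : ℝ} (h : s ≤ t) : Real.tanh s ≤ Real.tanh t := by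
  rcases eq_or_lt_of_le h with rfl | h
  · exact le_rfl
  · exact (tanh_lt_tanh' h).le

lemma tanh_nonneg' {t : ℝ} (h : 0 ≤ t) : 0 ≤ Real.tanh t := by
  have := tanh_le_tanh' h
  simpa [Real.tanh_zero] using this

lemma tanh_pos' {t : ℝ} (h : 0 < t) : 0 < Real.tanh t := by
  have := tanh_lt_tanh' h
  simpa [Real.tanh_zero] using this

lemma abs_tanh_le_one (t : ℝ) : |Real.tanh t| ≤ 1 := by
  rw [abs_le, Real.tanh_eq_sinh_div_cosh]
  constructor
  · rw [le_div_iff₀ (Real.cosh_pos t)]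
    have h1 := Real.cosh_add_sinh t
    have h2 := Real.exp_pos t
    nlinarith
  · rw [div_le_one (Real.cosh_pos t)]
    have h1 := Real.cosh_sub_sinh t
    have h2 := Real.exp_pos (-t)
    nlinarith

lemma g_even (a u : ℝ) : g a (-u) = g a u := by
  unfold g
  rw [mul_neg, Real.tanh_neg]
  ring

lemma K_even (b w : ℝ) : K b (-w) = K b w := by
  unfold K
  rw [neg_pow]
  norm_num

lemma g_mono {a : ℝ} (ha : 0 < a) {s t : ℝ} (hs : 0 ≤ s) (h : s ≤ t) :
    g a s ≤ g a t := by
  unfold g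
  exact mul_le_mul h (tanh_le_tanh' (by nlinarith)) (tanh_nonneg' (by positivity))
    (by linarith)

lemma g_strict {a : ℝ} (ha : 0 < a) {s t : ℝ} (hs : 0 ≤ s) (h : s < t) :
    g a s < g a t := by
  unfold g
  have ht : 0 < t := lt_of_le_of_lt hs h
  calc s * Real.tanh (a * s) ≤ s * Real.tanh (a * t) :=
        mul_le_mul_of_nonneg_left (tanh_le_tanh' (by nlinarith)) hs
    _ < t * Real.tanh (a * t) :=
        mul_lt_mul_of_pos_right h (tanh_pos' (by positivity))

lemma cont_g (a : ℝ) : Continuous (g a) := by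
  unfold g
  exact continuous_id.mul (continuous_tanh'.comp (continuous_const.mul continuous_id))

lemma cont_K (b : ℝ) : Continuous (K b) := by
  unfold K
  exact Real.continuous_exp.comp (continuous_const.mul (continuous_pow 2)).neg

lemma intK {b : ℝ} (hb : 0 < b) : Integrable (K b) := by
  have := integrable_exp_neg_mul_sq hb
  refine this.congr (Eventually.of_forall fun w => ?_)
  show Real.exp (-b * w ^ 2) = K b w
  unfold K
  rw [neg_mul]

lemma intAbsK {b : ℝ} (hb : 0 < b) : Integrable (fun w => |w| * K b w) := by
  have h := (integrable_mul_exp_neg_mul_sq hb).abs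
  refine h.congr (Eventually.of_forall fun w => ?_)
  show |w * Real.exp (-b * w ^ 2)| = |w| * K b w
  unfold K
  rw [abs_mul, abs_of_nonneg (Real.exp_nonneg _), neg_mul]

lemma int_gK {a b : ℝ} (hb : 0 < b) (x : ℝ) :
    Integrable (fun w => g a (w + x) * K b w) := by
  refine Integrable.mono' ((intAbsK hb).add ((intK hb).const_mul |x|))
    (((cont_g a).comp (continuous_id.add continuous_const)).mul (cont_K b)).aestronglyMeasurable
    (Eventually.of_forall fun w => ?_)
  have hK0 : 0 ≤ K b w := Real.exp_nonneg _
  have h1 : |g a (w + x)| ≤ |w| + |x| := by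
    unfold g
    rw [abs_mul]
    calc |w + x| * |Real.tanh (a * (w + x))| ≤ |w + x| * 1 :=
          mul_le_mul_of_nonneg_left (abs_tanh_le_one _) (abs_nonneg _)
      _ = |w + x| := mul_one _
      _ ≤ |w| + |x| := abs_add_le w x
  have h2 := mul_le_mul_of_nonneg_right h1 hK0
  rw [Real.norm_eq_abs, abs_mul, abs_of_nonneg hK0]
  calc |g a (w + x)| * K b w ≤ (|w| + |x|) * K b w := h2
    _ = |w| * K b w + |x| * K b w := add_mul _ _ _

end Stmt10

open Stmt10

/-- Fix `σ > 0`.  For `c > 0` let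
`F(c,x) = ∫ f(c,x,w) exp(−w²/(2σ²)) dw` with
`f(c,x,w) = (w+x) tanh(c(w+x)/σ²) + (w−x) tanh(c(w−x)/σ²)`.
Then for every fixed `c > 0`, `x ↦ F(c,x)` is strictly increasing on `x > 0`. -/
theorem statement10 (σ : ℝ) (hσ : 0 < σ) (c : ℝ) (hc : 0 < c) :
    StrictMonoOn (fun x : ℝ => ∫ w : ℝ,
      ((w + x) * Real.tanh (c * (w + x) / σ^2)
        + (w - x) * Real.tanh (c * (w - x) / σ^2)) * Real.exp (-w^2 / (2 * σ^2)))
      (Set.Ioi 0) := by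
  have hσ2 : (0:ℝ) < σ ^ 2 := by positivity
  set a : ℝ := c / σ ^ 2 with ha_def
  set b : ℝ := 1 / (2 * σ ^ 2) with hb_def
  have ha : 0 < a := by positivity
  have hb : 0 < b := by positivity
  -- rewrite the integrand
  have key : ∀ x : ℝ, (∫ w : ℝ,
      ((w + x) * Real.tanh (c * (w + x) / σ^2)
        + (w - x) * Real.tanh (c * (w - x) / σ^2)) * Real.exp (-w^2 / (2 * σ^2)))
      = (∫ w : ℝ, g a (w + x) * K b w) + (∫ w : ℝ, g a (w + -x) * K b w) := by
    intro x
    rw [← integral_add (int_gK hb x) (int_gK hb (-x))]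
    refine integral_congr_ae (Eventually.of_forall fun w => ?_)
    have e1 : c * (w + x) / σ ^ 2 = a * (w + x) := by rw [ha_def]; ring
    have e2 : c * (w - x) / σ ^ 2 = a * (w + -x) := by rw [ha_def]; ring
    have e3 : -w ^ 2 / (2 * σ ^ 2) = -(b * w ^ 2) := by rw [hb_def]; ring
    simp only [g, K]
    rw [e1, e2, e3]
    ring
  have refl_eq : ∀ x : ℝ, (∫ w : ℝ, g a (w + -x) * K b w)
      = ∫ w : ℝ, g a (w + x) * K b w := by
    intro x
    calc (∫ w : ℝ, g a (w + -x) * K b w)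
        = ∫ w : ℝ, g a (-w + -x) * K b (-w) :=
          (integral_neg_eq_self (fun w => g a (w + -x) * K b w) volume).symm
      _ = ∫ w : ℝ, g a (w + x) * K b w := by
          refine integral_congr_ae (Eventually.of_forall fun w => ?_)
          show g a (-w + -x) * K b (-w) = g a (w + x) * K b w
          have h1 : -w + -x = -(w + x) := by ring
          rw [h1, g_even, K_even]
  intro x₁ hx₁ x₂ hx₂ hlt
  simp only [Set.mem_Ioi] at hx₁ hx₂
  dsimp only
  rw [key x₁, key x₂, refl_eq x₁, refl_eq x₂]
  have hmain : (∫ w : ℝ, g a (w + x₁) * K b w) < ∫ w : ℝ, g a (w + x₂) * K b w := by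
    rw [← sub_pos, ← integral_sub (int_gK hb x₂) (int_gK hb x₁)]
    set m : ℝ := (x₁ + x₂) / 2 with hm_def
    set d : ℝ := (x₂ - x₁) / 2 with hd_def
    have hm : 0 < m := by rw [hm_def]; linarith
    have hd : 0 < d := by rw [hd_def]; linarith
    have hx2eq : x₂ = m + d := by rw [hm_def, hd_def]; ring
    have hx1eq : x₁ = m - d := by rw [hm_def, hd_def]; ring
    set D : ℝ → ℝ := fun w => g a (w + x₂) * K b w - g a (w + x₁) * K b w with hD
    set ψ : ℝ → ℝ := fun r => (g a (r + d) - g a (r - d)) * (K b (r - m) - K b (r + m))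
      with hψdef
    have intD : Integrable D := (int_gK hb x₂).sub (int_gK hb x₁)
    have intP : Integrable (fun r => D (r - m)) := intD.comp_sub_right m
    have intPneg : Integrable (fun r => D (-r - m)) := by
      have h := (intD.comp_sub_right m).comp_neg
      simpa using h
    have hψ : ∀ r : ℝ, D (r - m) + D (-r - m) = ψ r := by
      intro r
      have l1 : r - m + x₂ = r + d := by rw [hx2eq]; ring
      have l2 : r - m + x₁ = r - d := by rw [hx1eq]; ring
      have l3 : -r - m + x₂ = -(r - d) := by rw [hx2eq]; ring
      have l4 : -r - m + x₁ = -(r + d) := by rw [hx1eq]; ring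
      have l5 : -r - m = -(r + m) := by ring
      simp only [hD, hψdef]
      rw [l1, l2, l3, l4, l5, g_even, g_even, K_even]
      ring
    have step3 : (∫ w : ℝ, D w) = ∫ r : ℝ, D (r - m) :=
      (integral_sub_right_eq_self D m).symm
    have h1 : (∫ r in Iic (0:ℝ), D (r - m)) = ∫ r in Ioi (0:ℝ), D (-r - m) := by
      have h := integral_comp_neg_Ioi (0:ℝ) (fun r => D (r - m))
      simp only [neg_zero] at h
      exact h.symm
    have step4 : (∫ r : ℝ, D (r - m)) = ∫ r in Ioi (0:ℝ), ψ r := by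
      calc (∫ r : ℝ, D (r - m))
          = (∫ r in Iic (0:ℝ), D (r - m)) + ∫ r in Ioi (0:ℝ), D (r - m) :=
            (intervalIntegral.integral_Iic_add_Ioi intP.integrableOn intP.integrableOn).symm
        _ = (∫ r in Ioi (0:ℝ), D (-r - m)) + ∫ r in Ioi (0:ℝ), D (r - m) := by rw [h1]
        _ = ∫ r in Ioi (0:ℝ), (D (-r - m) + D (r - m)) :=
            (integral_add intPneg.integrableOn intP.integrableOn).symm
        _ = ∫ r in Ioi (0:ℝ), ψ r := by
            refine integral_congr_ae (Eventually.of_forall fun r => ?_)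
            show D (-r - m) + D (r - m) = ψ r
            rw [add_comm]
            exact hψ r
    have hψ_nonneg : ∀ r ∈ Ioi (0:ℝ), 0 ≤ ψ r := by
      intro r hr
      rw [Set.mem_Ioi] at hr
      rw [hψdef]
      apply mul_nonneg
      · rw [sub_nonneg]
        have habs : |r - d| ≤ r + d := by
          rw [abs_le]; constructor <;> nlinarith
        have hgg : g a (r - d) = g a |r - d| := by
          rcases abs_cases (r - d) with ⟨h, _⟩ | ⟨h, _⟩
          · rw [h]
          · rw [h, g_even]
        rw [hgg]
        exact g_mono ha (abs_nonneg _) habs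
      · rw [sub_nonneg]
        unfold K
        apply Real.exp_le_exp.mpr
        nlinarith [mul_pos hr hm, hb.le]
    have hψm_pos : 0 < ψ m := by
      rw [hψdef]
      apply mul_pos
      · rw [sub_pos]
        have habs : |m - d| < m + d := by
          rw [abs_lt]; constructor <;> nlinarith
        have hgg : g a (m - d) = g a |m - d| := by
          rcases abs_cases (m - d) with ⟨h, _⟩ | ⟨h, _⟩
          · rw [h]
          · rw [h, g_even]
        rw [hgg]
        exact g_strict ha (abs_nonneg _) habs
      · rw [sub_pos]
        unfold K
        apply Real.exp_lt_exp.mpr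
        nlinarith [mul_pos hm hm, hb]
    have hcontψ : Continuous ψ := by
      rw [hψdef]
      exact (((cont_g a).comp (continuous_id.add continuous_const)).sub
        ((cont_g a).comp (continuous_id.sub continuous_const))).mul
        (((cont_K b).comp (continuous_id.sub continuous_const)).sub
        ((cont_K b).comp (continuous_id.add continuous_const)))
    have hintψ : Integrable ψ :=
      (intP.add intPneg).congr (Eventually.of_forall hψ)
    have hpos : 0 < ∫ r in Ioi (0:ℝ), ψ r := by
      rw [setIntegral_pos_iff_support_of_nonneg_ae
        ((ae_restrict_iff' measurableSet_Ioi).mpr (Eventually.of_forall hψ_nonneg))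
        hintψ.integrableOn]
      have hU : IsOpen ({r : ℝ | 0 < ψ r} ∩ Ioi 0) :=
        (isOpen_lt continuous_const hcontψ).inter isOpen_Ioi
      have hsub : {r : ℝ | 0 < ψ r} ∩ Ioi 0 ⊆ support ψ ∩ Ioi 0 :=
        fun r ⟨h1, h2⟩ => ⟨ne_of_gt h1, h2⟩
      have hne : ({r : ℝ | 0 < ψ r} ∩ Ioi 0).Nonempty := ⟨m, hψm_pos, hm⟩
      exact lt_of_lt_of_le (hU.measure_pos volume hne) (measure_mono hsub)
    calc (0:ℝ) < ∫ r in Ioi (0:ℝ), ψ r := hpos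
      _ = ∫ w : ℝ, D w := by rw [step3, step4]
      _ = ∫ w : ℝ, (g a (w + x₂) * K b w - g a (w + x₁) * K b w) := by rw [hD]
  linarith
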